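/- Let Γ = Γ₀(p) for a prime p, let d = gcd(p−1, 12) and n = (p−1)/d. The Eisenstein series E = dlog(u) attached to the modular unit u(z) = (Δ(pz)/Δ(z))^{1/d} has L-function L(E, s) = (24/d)·(1 − p^{1−s})·ζ(s−1)·ζ(s), and hence L(E, 1) = −(12/d)·log p. -/

import Mathlib

open Filter Topology

namespace Stmt15

open Complex LSeries

/-- `σ'(k) = Σ_{m | k, p ∤ m} m`. -/
def sigma' (p k : ℕ) : ℕ := ∑ m ∈ k.divisors.filter (fun m => ¬ p ∣ m), m

/-- The `L`-function of the Eisenstein series `E = dlog(u)` on `Γ₀(p)`: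
`L(E,s) = (24/d)·Σ_{k≥1} σ'(k) k^{−s}` where `d = gcd(p−1,12)`. -/
noncomputable def LE (p : ℕ) (s : ℂ) : ℂ :=
  ((24 : ℂ) / (Nat.gcd (p - 1) 12 : ℂ)) * ∑' k : ℕ, (sigma' p k : ℂ) * (k : ℂ) ^ (-s)

noncomputable def gg (p : ℕ) (n : ℕ) : ℂ := if p ∣ n then 0 else (n : ℂ)
noncomputable def hh (p : ℕ) (n : ℕ) : ℂ := if p ∣ n then (n : ℂ) else 0

lemma term_id (s : ℂ) (n : ℕ) : term (fun n => (n : ℂ)) s n = term 1 (s - 1) n := by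
  rcases eq_or_ne n 0 with rfl | hn
  · simp
  · have hn' : (n : ℂ) ≠ 0 := Nat.cast_ne_zero.mpr hn
    rw [term_of_ne_zero hn, term_of_ne_zero hn, Pi.one_apply]
    have hpow : (n : ℂ) ^ s = (n : ℂ) ^ (s - 1) * (n : ℂ) := by
      conv_lhs => rw [show s = s - 1 + 1 by ring]
      rw [cpow_add _ _ hn', cpow_one]
    rw [hpow, mul_comm, ← div_div, div_self hn']

lemma summable_id {s : ℂ} (hs : 2 < s.re) : LSeriesSummable (fun n => (n : ℂ)) s := by
  have : LSeriesSummable 1 (s - 1) := LSeriesSummable_one_iff.mpr (by simp; linarith)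
  exact (summable_congr (fun n => term_id s n)).mpr this

lemma LSeries_id {s : ℂ} (hs : 2 < s.re) :
    LSeries (fun n => (n : ℂ)) s = riemannZeta (s - 1) := by
  rw [LSeries, tsum_congr (term_id s), ← LSeries]
  exact LSeries_one_eq_riemannZeta (by simp; linarith)

lemma summable_hh (p : ℕ) {s : ℂ} (hs : 2 < s.re) : LSeriesSummable (hh p) s := by
  refine Summable.of_norm_bounded (summable_id hs).norm fun n => norm_term_le s ?_
  unfold hh; split <;> simp

lemma summable_gg (p : ℕ) {s : ℂ} (hs : 2 < s.re) : LSeriesSummable (gg p) s := by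
  refine Summable.of_norm_bounded (summable_id hs).norm fun n => norm_term_le s ?_
  unfold gg; split <;> simp

lemma term_hh (p : ℕ) (hp : p.Prime) (s : ℂ) (m : ℕ) :
    term (hh p) s (p * m) = (p : ℂ) ^ ((1 : ℂ) - s) * term 1 (s - 1) m := by
  have hp0 : (p : ℂ) ≠ 0 := Nat.cast_ne_zero.mpr hp.ne_zero
  rcases eq_or_ne m 0 with rfl | hm
  · simp
  · have hpm : p * m ≠ 0 := Nat.mul_ne_zero hp.ne_zero hm
    have hm' : (m : ℂ) ≠ 0 := Nat.cast_ne_zero.mpr hm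
    rw [term_of_ne_zero hpm, ← term_id, term_of_ne_zero hm]
    have hdvd : p ∣ p * m := Dvd.intro m rfl
    have hmul : ((p * m : ℕ) : ℂ) ^ s = (p : ℂ) ^ s * (m : ℂ) ^ s := by
      rw [Nat.cast_mul,
        show (p : ℂ) = ((p : ℝ) : ℂ) from by norm_num,
        show (m : ℂ) = ((m : ℝ) : ℂ) from by norm_num]
      exact mul_cpow_ofReal_nonneg p.cast_nonneg m.cast_nonneg s
    rw [hh, if_pos hdvd, hmul]
    rw [cpow_sub _ _ hp0, cpow_one]
    push_cast
    field_simp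

lemma LSeries_hh (p : ℕ) (hp : p.Prime) {s : ℂ} (hs : 2 < s.re) :
    LSeries (hh p) s = (p : ℂ) ^ ((1 : ℂ) - s) * riemannZeta (s - 1) := by
  have hinj : Function.Injective (fun m : ℕ => p * m) :=
    fun a b hab => Nat.eq_of_mul_eq_mul_left hp.pos hab
  have hsupp : Function.support (term (hh p) s) ⊆ Set.range (fun m : ℕ => p * m) := by
    intro n hn
    rcases eq_or_ne n 0 with rfl | hn0
    · simp at hn
    · rw [Function.mem_support, term_of_ne_zero hn0] at hn
      have : p ∣ n := by
        by_contra hdvd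
        rw [hh, if_neg hdvd] at hn
        simp at hn
      obtain ⟨m, rfl⟩ := this
      exact ⟨m, rfl⟩
  calc LSeries (hh p) s = ∑' m : ℕ, term (hh p) s (p * m) := (hinj.tsum_eq hsupp).symm
    _ = ∑' m : ℕ, (p : ℂ) ^ ((1 : ℂ) - s) * term 1 (s - 1) m :=
        tsum_congr (term_hh p hp s)
    _ = (p : ℂ) ^ ((1 : ℂ) - s) * LSeries 1 (s - 1) := tsum_mul_left
    _ = _ := by rw [LSeries_one_eq_riemannZeta (by simp; linarith)]

lemma LSeries_gg (p : ℕ) (hp : p.Prime) {s : ℂ} (hs : 2 < s.re) :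
    LSeries (gg p) s = (1 - (p : ℂ) ^ ((1 : ℂ) - s)) * riemannZeta (s - 1) := by
  have heq : gg p = (fun n : ℕ => (n : ℂ)) - hh p := by
    funext n; simp only [Pi.sub_apply]; unfold gg hh; split <;> ring
  rw [heq, LSeries_sub (summable_id hs) (summable_hh p hs), LSeries_id hs,
    LSeries_hh p hp hs]
  ring

lemma sigma'_eq_conv (p : ℕ) :
    (fun n => (sigma' p n : ℂ)) = LSeries.convolution (1 : ℕ → ℂ) (gg p) := by
  funext n
  rcases eq_or_ne n 0 with rfl | hn
  · simp [sigma', convolution_map_zero]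
  · simp only [convolution_def]
    rw [Nat.sum_divisorsAntidiagonal' (f := fun a b => (1 : ℕ → ℂ) a * gg p b)]
    simp only [Pi.one_apply, one_mul]
    rw [sigma']
    push_cast
    rw [Finset.sum_filter]
    refine Finset.sum_congr rfl fun i _ => ?_
    unfold gg
    by_cases hdvd : p ∣ i <;> simp [hdvd]

lemma part1 (p : ℕ) (hp : p.Prime) {s : ℂ} (hs : 2 < s.re) :
    (∑' k : ℕ, (sigma' p k : ℂ) * (k : ℂ) ^ (-s))
      = (1 - (p : ℂ) ^ ((1 : ℂ) - s)) * riemannZeta (s - 1) * riemannZeta s := by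
  have h1 : (∑' k : ℕ, (sigma' p k : ℂ) * (k : ℂ) ^ (-s))
      = LSeries (fun n => (sigma' p n : ℂ)) s := by
    refine tsum_congr fun k => ?_
    rcases eq_or_ne k 0 with rfl | hk
    · simp [sigma']
    · rw [term_of_ne_zero hk, cpow_neg, div_eq_mul_inv]
  rw [h1, sigma'_eq_conv p,
    LSeries_convolution' (LSeriesSummable_one_iff.mpr (by linarith)) (summable_gg p hs),
    LSeries_one_eq_riemannZeta (by linarith), LSeries_gg p hp hs]
  ring

lemma part2 (p : ℕ) (hp : p.Prime) :
    Tendsto (fun s : ℂ =>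
        ((24 : ℂ) / (Nat.gcd (p - 1) 12 : ℂ)) * (1 - (p : ℂ) ^ ((1 : ℂ) - s)) *
          riemannZeta (s - 1) * riemannZeta s)
      (𝓝[≠] (1 : ℂ))
      (𝓝 (-((12 : ℂ) / (Nat.gcd (p - 1) 12 : ℂ)) * Real.log p)) := by
  set c : ℂ := (24 : ℂ) / (Nat.gcd (p - 1) 12 : ℂ)
  have hp0 : (p : ℂ) ≠ 0 := Nat.cast_ne_zero.mpr hp.ne_zero
  -- derivative of s ↦ 1 - p^(1-s) at 1 is log p
  have hderiv : HasDerivAt (fun s : ℂ => 1 - (p : ℂ) ^ ((1 : ℂ) - s))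
      (Complex.log p) 1 := by
    have h1 : HasDerivAt (fun s : ℂ => (1 : ℂ) - s) (-1) 1 := by
      simpa using (hasDerivAt_id (1 : ℂ)).const_sub 1
    have h2 := h1.const_cpow (c := (p : ℂ)) (Or.inl hp0)
    simp only [sub_self, cpow_zero] at h2
    have := h2.const_sub 1
    rw [show Complex.log p = -(1 * Complex.log p * -1) by ring]
    exact this
  have hslope : Tendsto (fun s : ℂ => (1 - (p : ℂ) ^ ((1 : ℂ) - s)) / (s - 1))
      (𝓝[≠] 1) (𝓝 (Complex.log p)) := by
    have := hasDerivAt_iff_tendsto_slope.mp hderiv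
    refine this.congr fun s => ?_
    simp [slope_def_field, sub_zero]
  have hz0 : Tendsto (fun s : ℂ => riemannZeta (s - 1)) (𝓝[≠] 1) (𝓝 (-1/2 : ℂ)) := by
    have hcont : ContinuousAt riemannZeta 0 :=
      (differentiableAt_riemannZeta (by norm_num)).continuousAt
    have hsub : Tendsto (fun s : ℂ => s - 1) (𝓝[≠] 1) (𝓝 0) := by
      have h := (continuous_sub_right (1 : ℂ)).tendsto 1
      rw [sub_self] at h
      exact h.mono_left nhdsWithin_le_nhds
    have := hcont.tendsto.comp hsub
    rwa [riemannZeta_zero] at this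
  have hres := riemannZeta_residue_one
  have hmain : Tendsto (fun s : ℂ =>
      c * ((1 - (p : ℂ) ^ ((1 : ℂ) - s)) / (s - 1)) * riemannZeta (s - 1) *
        ((s - 1) * riemannZeta s))
      (𝓝[≠] 1) (𝓝 (c * Complex.log p * (-1/2) * 1)) :=
    (((tendsto_const_nhds.mul hslope).mul hz0).mul hres)
  have hlog : Complex.log p = (Real.log p : ℂ) := (Complex.natCast_log).symm
  have hval : c * Complex.log p * (-1/2) * 1 =
      -((12 : ℂ) / (Nat.gcd (p - 1) 12 : ℂ)) * Real.log p := by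
    rw [hlog]; unfold c; ring
  rw [hval] at hmain
  refine hmain.congr' ?_
  filter_upwards [self_mem_nhdsWithin] with s hs
  have hs1 : s - 1 ≠ 0 := sub_ne_zero.mpr hs
  field_simp

/-- Let `Γ = Γ₀(p)`, `d = gcd(p−1,12)`.  The Eisenstein series
`E = dlog(u)` of the modular unit `u = (Δ(pz)/Δ(z))^{1/d}` has
`L(E,s) = (24/d)·(1 − p^{1−s})·ζ(s−1)·ζ(s)` (on the half-plane of convergence
`Re s > 2`), and hence (taking the limit of the continuation as `s → 1`)
`L(E,1) = −(12/d)·log p`. -/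
theorem stmt_15 (p : ℕ) (hp : p.Prime) :
    (∀ s : ℂ, 2 < s.re →
      LE p s = ((24 : ℂ) / (Nat.gcd (p - 1) 12 : ℂ)) * (1 - (p : ℂ) ^ ((1 : ℂ) - s)) *
        riemannZeta (s - 1) * riemannZeta s) ∧
    Tendsto (fun s : ℂ =>
        ((24 : ℂ) / (Nat.gcd (p - 1) 12 : ℂ)) * (1 - (p : ℂ) ^ ((1 : ℂ) - s)) *
          riemannZeta (s - 1) * riemannZeta s)
      (𝓝[≠] (1 : ℂ))
      (𝓝 (-((12 : ℂ) / (Nat.gcd (p - 1) 12 : ℂ)) * Real.log p)) := by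
  constructor
  · intro s hs
    rw [LE, part1 p hp hs]
    ring
  · exact part2 p hp

end Stmt15
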